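/- Let n ≥ 1 be an integer, ρ : [0,∞) → (0,∞) a C¹ function with ρ(s) = s + O(s^(1−τ)) and ρ'(s) → 1 as s → ∞ for some τ > n, and let v be a solution on [s₀,∞) of v' + ((2n+1)/((1−v²)s))·v = g(s), where |g(s)| ≤ C₁(s^(−2τ−1) + s^(−τ−1)|v(s)|) and |v| ≤ √(1−δ) for some δ > 0. Then for every τ₀ < min{τ, n + 1/2} there is a constant C with |v(s)| ≤ C·s^(−2τ₀) for all s ≥ s₀. -/

import Mathlib

open Set

open MeasureTheory intervalIntegral

lemma jang_mono_aux {s₀ : ℝ} (F F' : ℝ → ℝ)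
    (hF : ∀ s ∈ Ici s₀, HasDerivAt F (F' s) s)
    (hF' : ∀ s ∈ Ici s₀, 0 ≤ F' s) : MonotoneOn F (Ici s₀) := by
  apply monotoneOn_of_deriv_nonneg (convex_Ici _)
  · exact fun x hx => (hF x hx).continuousAt.continuousWithinAt
  · intro x hx
    rw [interior_Ici] at hx
    exact (hF x (mem_Ici.2 (mem_Ioi.1 hx).le)).differentiableAt.differentiableWithinAt
  · intro x hx
    rw [interior_Ici] at hx
    rw [(hF x (mem_Ici.2 (mem_Ioi.1 hx).le)).deriv]
    exact hF' x (mem_Ici.2 (mem_Ioi.1 hx).le)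

lemma jang_decay_key (c s₀ : ℝ) (hs₀ : 0 < s₀) (a v v' g : ℝ → ℝ)
    (ha_cont : Continuous a)
    (ha_lb : ∀ s ≥ s₀, c / s ≤ a s)
    (hv : ∀ s ≥ s₀, HasDerivAt v (v' s) s)
    (hode : ∀ s ≥ s₀, v' s = g s - a s * v s)
    (K α : ℝ) (hK : 0 ≤ K) (hα : α < c)
    (hg : ∀ s ≥ s₀, |g s| ≤ K * s ^ (-α - 1)) :
    ∀ s ≥ s₀, |v s| ≤ (|v s₀| * s₀ ^ α + K / (c - α)) * s ^ (-α) := by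
  have hca : (0:ℝ) < c - α := by linarith
  set A : ℝ → ℝ := fun s => ∫ t in s₀..s, a t with hAdef
  have hA : ∀ s, HasDerivAt A (a s) s := fun s =>
    integral_hasDerivAt_right (ha_cont.intervalIntegrable _ _)
      (ha_cont.stronglyMeasurable.stronglyMeasurableAtFilter) ha_cont.continuousAt
  set E : ℝ → ℝ := fun s => Real.exp (A s) with hEdef
  have hE : ∀ s, HasDerivAt E (a s * E s) s := by
    intro s
    simpa [hEdef, mul_comm] using (hA s).exp
  have hEpos : ∀ s, 0 < E s := fun s => Real.exp_pos _
  have hE0 : E s₀ = 1 := by simp [hEdef, hAdef]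
  -- derivative of u = v * E
  have hu : ∀ s ≥ s₀, HasDerivAt (fun t => v t * E t) (g s * E s) s := by
    intro s hs
    have h := (hv s hs).mul (hE s)
    have : v' s * E s + v s * (a s * E s) = g s * E s := by
      rw [hode s hs]; ring
    rwa [this] at h
  -- derivative of χ
  set q : ℝ := K / (c - α) with hq
  have hq0 : 0 ≤ q := div_nonneg hK hca.le
  have hχ : ∀ s ≥ s₀, HasDerivAt (fun t => q * (t ^ (-α) * E t))
      (q * ((-α) * s ^ (-α - 1) * E s + s ^ (-α) * (a s * E s))) s := by
    intro s hs
    have hsp : (0:ℝ) < s := lt_of_lt_of_le hs₀ hs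
    exact (((Real.hasDerivAt_rpow_const (p := -α) (Or.inl hsp.ne')).mul (hE s)).const_mul q)
  -- key inequality for derivative comparison
  have hcomp : ∀ s ≥ s₀, |g s| * E s ≤ q * ((-α) * s ^ (-α - 1) * E s + s ^ (-α) * (a s * E s)) := by
    intro s hs
    have hsp : (0:ℝ) < s := lt_of_lt_of_le hs₀ hs
    have hP : (0:ℝ) < s ^ (-α - 1) := Real.rpow_pos_of_pos hsp _
    have hEp := hEpos s
    have hgs : |g s| ≤ K * s ^ (-α - 1) := hg s hs
    have has : c ≤ a s * s := by
      have := ha_lb s hs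
      rwa [div_le_iff₀ hsp] at this
    have hsplit : s ^ (-α) = s ^ (-α - 1) * s := by
      rw [← Real.rpow_add_one hsp.ne']; ring_nf
    rw [hsplit]
    have h1 : |g s| * E s ≤ K * s ^ (-α - 1) * E s :=
      mul_le_mul_of_nonneg_right hgs hEp.le
    refine h1.trans ?_
    have hKq : K = q * (c - α) := by rw [hq, div_mul_cancel₀ _ hca.ne']
    rw [hKq]
    have expand : q * (-α * s ^ (-α - 1) * E s + s ^ (-α - 1) * s * (a s * E s))
        = q * (s ^ (-α - 1) * E s) * (a s * s - α) := by ring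
    rw [expand]
    have h2 : q * (s ^ (-α-1) * E s) * (c - α) ≤ q * (s ^ (-α-1) * E s) * (a s * s - α) := by
      apply mul_le_mul_of_nonneg_left (by linarith) (by positivity)
    calc q * (c - α) * s ^ (-α - 1) * E s = q * (s ^ (-α-1) * E s) * (c - α) := by ring
    _ ≤ _ := h2
  -- monotone functions
  have monoP : MonotoneOn (fun s => q * (s ^ (-α) * E s) - v s * E s) (Ici s₀) := by
    apply jang_mono_aux _ (fun s => q * ((-α) * s ^ (-α - 1) * E s + s ^ (-α) * (a s * E s)) - g s * E s)
    · exact fun s hs => (hχ s hs).sub (hu s hs)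
    · intro s hs
      have h1 := hcomp s hs
      have h2 : g s * E s ≤ |g s| * E s :=
        mul_le_mul_of_nonneg_right (le_abs_self _) (hEpos s).le
      linarith
  have monoM : MonotoneOn (fun s => q * (s ^ (-α) * E s) + v s * E s) (Ici s₀) := by
    apply jang_mono_aux _ (fun s => q * ((-α) * s ^ (-α - 1) * E s + s ^ (-α) * (a s * E s)) + g s * E s)
    · exact fun s hs => (hχ s hs).add (hu s hs)
    · intro s hs
      have h1 := hcomp s hs
      have h2 : -g s * E s ≤ |g s| * E s :=
        mul_le_mul_of_nonneg_right (neg_le_abs (g s)) (hEpos s).le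
      linarith
  -- growth lower bound for E
  have hElb : ∀ s ≥ s₀, s ^ c / s₀ ^ c ≤ E s := by
    intro s hs
    have hsp : (0:ℝ) < s := lt_of_lt_of_le hs₀ hs
    have monoH : MonotoneOn (fun t => A t - c * Real.log t) (Ici s₀) := by
      apply jang_mono_aux _ (fun t => a t - c * (1/t))
      · intro t ht
        have htp : (0:ℝ) < t := lt_of_lt_of_le hs₀ ht
        have hl : HasDerivAt (fun t => c * Real.log t) (c * (1/t)) t := by
          simpa [one_div] using (Real.hasDerivAt_log htp.ne').const_mul c
        exact (hA t).sub hl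
      · intro t ht
        have htp : (0:ℝ) < t := lt_of_lt_of_le hs₀ ht
        have := ha_lb t ht
        rw [div_le_iff₀ htp] at this
        have h1 : c * (1/t) ≤ a t := by
          rw [mul_one_div, div_le_iff₀ htp]; linarith
        linarith
    have hm := monoH (self_mem_Ici) (mem_Ici.2 hs) hs
    have hA0 : A s₀ = 0 := by simp [hAdef]
    simp only [hA0, zero_sub] at hm
    -- hm : -(c * log s₀) ≤ A s - c * log s
    have hAs : c * Real.log s - c * Real.log s₀ ≤ A s := by linarith
    have : Real.exp (c * Real.log s - c * Real.log s₀) ≤ E s := Real.exp_le_exp.2 hAs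
    calc s ^ c / s₀ ^ c = Real.exp (c * Real.log s - c * Real.log s₀) := by
          rw [Real.exp_sub, Real.rpow_def_of_pos hsp, Real.rpow_def_of_pos hs₀]
          ring_nf
    _ ≤ E s := this
  -- conclude
  intro s hs
  have hsp : (0:ℝ) < s := lt_of_lt_of_le hs₀ hs
  have hEp := hEpos s
  have hP := monoP self_mem_Ici (mem_Ici.2 hs) hs
  have hM := monoM self_mem_Ici (mem_Ici.2 hs) hs
  simp only [hE0, mul_one] at hP hM
  have hχ0 : 0 ≤ q * (s₀ ^ (-α) * 1) := by positivity
  have hub : v s * E s ≤ |v s₀| + q * (s ^ (-α) * E s) := by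
    have h1 := le_abs_self (v s₀)
    linarith
  have hlb : -(|v s₀| + q * (s ^ (-α) * E s)) ≤ v s * E s := by
    have h1 := neg_abs_le (v s₀)
    linarith
  have habs : |v s| * E s ≤ |v s₀| + q * (s ^ (-α) * E s) := by
    have := abs_le.2 ⟨hlb, hub⟩
    rwa [abs_mul, abs_of_pos hEp] at this
  -- divide by E s and use lower bound on E
  have hdiv : |v s| ≤ |v s₀| / E s + q * s ^ (-α) := by
    rw [div_add' _ _ _ hEp.ne']
    rw [le_div_iff₀ hEp]
    calc |v s| * E s ≤ |v s₀| + q * (s ^ (-α) * E s) := habs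
    _ = |v s₀| + q * s ^ (-α) * E s := by ring
  have hEinv : |v s₀| / E s ≤ |v s₀| * s₀ ^ α * s ^ (-α) := by
    have h0 : (0:ℝ) < s ^ c / s₀ ^ c := by positivity
    have h1 : |v s₀| / E s ≤ |v s₀| / (s ^ c / s₀ ^ c) := by
      apply div_le_div_of_nonneg_left (abs_nonneg _) h0 (hElb s hs)
    refine h1.trans ?_
    rw [div_div_eq_mul_div, mul_div_assoc]
    have h2 : s₀ ^ c / s ^ c ≤ s₀ ^ α * s ^ (-α) := by
      have h3 : s₀ ^ c / s ^ c = s₀ ^ c * s ^ (-c) := by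
        rw [Real.rpow_neg hsp.le]; ring
      rw [h3]
      have h4 : s ^ (-c) = s ^ (α - c) * s ^ (-α) := by
        rw [← Real.rpow_add hsp]; ring_nf
      rw [h4]
      have h5 : s ^ (α - c) ≤ s₀ ^ (α - c) :=
        Real.rpow_le_rpow_of_nonpos hs₀ hs (by linarith)
      calc s₀ ^ c * (s ^ (α - c) * s ^ (-α)) ≤ s₀ ^ c * (s₀ ^ (α - c) * s ^ (-α)) := by
            apply mul_le_mul_of_nonneg_left _ (Real.rpow_nonneg hs₀.le _)
            exact mul_le_mul_of_nonneg_right h5 (Real.rpow_nonneg hsp.le _)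
      _ = s₀ ^ α * s ^ (-α) := by rw [← mul_assoc, ← Real.rpow_add hs₀]; ring_nf
    calc |v s₀| * (s₀ ^ c / s ^ c) ≤ |v s₀| * (s₀ ^ α * s ^ (-α)) :=
          mul_le_mul_of_nonneg_left h2 (abs_nonneg _)
    _ = |v s₀| * s₀ ^ α * s ^ (-α) := by ring
  calc |v s| ≤ |v s₀| / E s + q * s ^ (-α) := hdiv
  _ ≤ |v s₀| * s₀ ^ α * s ^ (-α) + q * s ^ (-α) := by linarith [hEinv]
  _ = (|v s₀| * s₀ ^ α + K / (c - α)) * s ^ (-α) := by rw [hq]; ring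

/-- Polynomial decay for the reduced generalized Jang equation in an asymptotically flat
end: if `v' + ((2n+1)/((1−v²)s))v = g` on `[s₀,∞)` with `|g| ≤ C₁(s^(−2τ−1)+s^(−τ−1)|v|)`
and `|v| ≤ √(1−δ)`, then `|v(s)| ≤ C·s^(−2τ₀)` for any `τ₀ < min{τ, n+1/2}`. -/
theorem jang_polynomial_decay (n : ℕ) (hn : 1 ≤ n) (τ : ℝ) (hτ : (n : ℝ) < τ)
    (s₀ : ℝ) (hs₀ : 0 < s₀) (ρ : ℝ → ℝ)
    (hρ1 : ∀ s, 0 < ρ s) (hρC1 : ContDiff ℝ 1 ρ)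
    (hρasym : ∃ Cρ : ℝ, ∀ s ≥ s₀, |ρ s - s| ≤ Cρ * s ^ (1 - τ))
    (hρ' : Filter.Tendsto (deriv ρ) Filter.atTop (nhds 1))
    (v v' g : ℝ → ℝ) (C₁ δ : ℝ) (hδ : 0 < δ)
    (hv : ∀ s ≥ s₀, HasDerivAt v (v' s) s)
    (hODE : ∀ s ≥ s₀, v' s + (2 * (n : ℝ) + 1) / ((1 - v s ^ 2) * s) * v s = g s)
    (hg : ∀ s ≥ s₀, |g s| ≤ C₁ * (s ^ (-2 * τ - 1) + s ^ (-τ - 1) * |v s|))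
    (hvb : ∀ s ≥ s₀, |v s| ≤ Real.sqrt (1 - δ)) :
    ∀ τ₀ : ℝ, τ₀ < min τ ((n : ℝ) + 1 / 2) →
      ∃ C : ℝ, ∀ s ≥ s₀, |v s| ≤ C * s ^ (-2 * τ₀) := by
  intro τ₀ hτ₀
  have hn1 : (1:ℝ) ≤ (n:ℝ) := by exact_mod_cast hn
  set c : ℝ := 2 * (n:ℝ) + 1 with hc
  set τ₁ : ℝ := max τ₀ (n:ℝ) with hτ₁
  have hτ₁τ : τ₁ < τ := max_lt (hτ₀.trans_le (min_le_left _ _)) hτ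
  have hτ₁n : τ₁ < (n:ℝ) + 1/2 := max_lt (hτ₀.trans_le (min_le_right _ _)) (by linarith)
  have hτ₁pos : (0:ℝ) < τ₁ := lt_of_lt_of_le (by linarith) (le_max_right _ _)
  have hτpos : (0:ℝ) < τ := by linarith
  have h2τ₁c : 2 * τ₁ < c := by rw [hc]; linarith
  have hτ₀τ₁ : τ₀ ≤ τ₁ := le_max_left _ _
  set d : ℝ := min δ 1 with hd
  have hdpos : (0:ℝ) < d := lt_min hδ one_pos
  have hd1 : d ≤ 1 := min_le_right _ _
  set M : ℝ := Real.sqrt (1 - δ) with hM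
  have hMnn : 0 ≤ M := Real.sqrt_nonneg _
  -- bound on v²
  have hv2 : ∀ t ≥ s₀, v t ^ 2 ≤ 1 - d := by
    intro t ht
    have h1 : |v t| ≤ Real.sqrt (1 - d) :=
      (hvb t ht).trans (Real.sqrt_le_sqrt (by have : d ≤ δ := min_le_left _ _; linarith))
    have h2 : v t ^ 2 = |v t| ^ 2 := (sq_abs _).symm
    rw [h2]
    calc |v t| ^ 2 ≤ Real.sqrt (1 - d) ^ 2 :=
          pow_le_pow_left₀ (abs_nonneg _) h1 2
    _ = 1 - d := Real.sq_sqrt (by linarith)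
  -- extended coefficient
  set a : ℝ → ℝ := fun t => c / ((1 - v (max t s₀) ^ 2) * max t s₀) with ha
  have hdenom : ∀ t, 0 < (1 - v (max t s₀) ^ 2) * max t s₀ := by
    intro t
    have h1 := hv2 (max t s₀) (le_max_right _ _)
    have h2 : s₀ ≤ max t s₀ := le_max_right _ _
    have : d ≤ 1 - v (max t s₀) ^ 2 := by linarith
    exact mul_pos (by linarith) (by linarith)
  have hwcont : Continuous fun t => v (max t s₀) := by
    rw [continuous_iff_continuousAt]
    intro t
    exact ContinuousAt.comp (hv _ (le_max_right _ _)).continuousAt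
      ((continuous_id.max continuous_const).continuousAt)
  have ha_cont : Continuous a := by
    apply continuous_const.div
    · exact (continuous_const.sub (hwcont.pow 2)).mul (continuous_id.max continuous_const)
    · exact fun t => (hdenom t).ne'
  have hamax : ∀ s ≥ s₀, a s = c / ((1 - v s ^ 2) * s) := by
    intro s hs
    simp only [ha, max_eq_left hs]
  have ha_lb : ∀ s ≥ s₀, c / s ≤ a s := by
    intro s hs
    have hsp : (0:ℝ) < s := lt_of_lt_of_le hs₀ hs
    rw [hamax s hs]
    have h1 := hdenom s
    rw [max_eq_left hs] at h1
    have hvsq : 0 ≤ v s ^ 2 := sq_nonneg _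
    have h2 : (1 - v s ^ 2) * s ≤ s := by nlinarith
    have hcpos : (0:ℝ) < c := by rw [hc]; linarith
    exact div_le_div_of_nonneg_left hcpos.le h1 h2
  have hode : ∀ s ≥ s₀, v' s = g s - a s * v s := by
    intro s hs
    rw [hamax s hs]
    have := hODE s hs
    linarith
  -- nonnegative version of C₁
  set C₁' : ℝ := max C₁ 0 with hC₁'
  have hC₁'nn : 0 ≤ C₁' := le_max_right _ _
  have hg' : ∀ s ≥ s₀, |g s| ≤ C₁' * (s ^ (-2*τ - 1) + s ^ (-τ - 1) * |v s|) := by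
    intro s hs
    have hsp : (0:ℝ) < s := lt_of_lt_of_le hs₀ hs
    refine (hg s hs).trans ?_
    apply mul_le_mul_of_nonneg_right (le_max_left _ _)
    have h1 : (0:ℝ) < s ^ (-2*τ - 1) := Real.rpow_pos_of_pos hsp _
    have h2 : (0:ℝ) ≤ s ^ (-τ - 1) * |v s| :=
      mul_nonneg (Real.rpow_pos_of_pos hsp _).le (abs_nonneg _)
    linarith
  -- generic power comparison
  have hpow : ∀ e₁ e₂ : ℝ, e₁ ≤ e₂ → ∀ s ≥ s₀, s ^ e₁ ≤ s₀ ^ (e₁ - e₂) * s ^ e₂ := by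
    intro e₁ e₂ he s hs
    have hsp : (0:ℝ) < s := lt_of_lt_of_le hs₀ hs
    have h1 : s ^ e₁ = s ^ (e₁ - e₂) * s ^ e₂ := by
      rw [← Real.rpow_add hsp]; ring_nf
    rw [h1]
    apply mul_le_mul_of_nonneg_right _ (Real.rpow_nonneg hsp.le _)
    exact Real.rpow_le_rpow_of_nonpos hs₀ hs (by linarith)
  -- Step 1
  set K₁ : ℝ := C₁' * (s₀ ^ (-2*τ - 1 - (-τ₁ - 1)) + M * s₀ ^ (-τ - 1 - (-τ₁ - 1))) with hK₁def
  have hK₁nn : 0 ≤ K₁ :=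
    mul_nonneg hC₁'nn (add_nonneg (Real.rpow_nonneg hs₀.le _)
      (mul_nonneg hMnn (Real.rpow_nonneg hs₀.le _)))
  have hg1 : ∀ s ≥ s₀, |g s| ≤ K₁ * s ^ (-τ₁ - 1) := by
    intro s hs
    have hsp : (0:ℝ) < s := lt_of_lt_of_le hs₀ hs
    have b1 := hpow (-2*τ - 1) (-τ₁ - 1) (by linarith) s hs
    have b2 := hpow (-τ - 1) (-τ₁ - 1) (by linarith) s hs
    have hvM := hvb s hs
    have h3 : s ^ (-τ - 1) * |v s| ≤ M * (s₀ ^ (-τ - 1 - (-τ₁ - 1)) * s ^ (-τ₁ - 1)) := by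
      calc s ^ (-τ - 1) * |v s| ≤ s ^ (-τ - 1) * M :=
            mul_le_mul_of_nonneg_left hvM (Real.rpow_nonneg hsp.le _)
      _ = M * s ^ (-τ - 1) := by ring
      _ ≤ M * (s₀ ^ (-τ - 1 - (-τ₁ - 1)) * s ^ (-τ₁ - 1)) :=
            mul_le_mul_of_nonneg_left b2 hMnn
    refine (hg' s hs).trans ?_
    calc C₁' * (s ^ (-2*τ - 1) + s ^ (-τ - 1) * |v s|)
        ≤ C₁' * (s₀ ^ (-2*τ - 1 - (-τ₁ - 1)) * s ^ (-τ₁ - 1)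
            + M * (s₀ ^ (-τ - 1 - (-τ₁ - 1)) * s ^ (-τ₁ - 1))) :=
          mul_le_mul_of_nonneg_left (add_le_add b1 h3) hC₁'nn
    _ = K₁ * s ^ (-τ₁ - 1) := by rw [hK₁def]; ring
  have hτ₁c : τ₁ < c := by rw [hc]; linarith
  have step1 := jang_decay_key c s₀ hs₀ a v v' g ha_cont ha_lb hv hode K₁ τ₁ hK₁nn hτ₁c hg1
  set C₂ : ℝ := |v s₀| * s₀ ^ τ₁ + K₁ / (c - τ₁) with hC₂def
  have hC₂nn : 0 ≤ C₂ :=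
    add_nonneg (mul_nonneg (abs_nonneg _) (Real.rpow_nonneg hs₀.le _))
      (div_nonneg hK₁nn (by linarith))
  -- Step 2
  set K₂ : ℝ := C₁' * (s₀ ^ (-2*τ - 1 - (-(2*τ₁) - 1))
      + C₂ * s₀ ^ (-τ - 1 + -τ₁ - (-(2*τ₁) - 1))) with hK₂def
  have hK₂nn : 0 ≤ K₂ :=
    mul_nonneg hC₁'nn (add_nonneg (Real.rpow_nonneg hs₀.le _)
      (mul_nonneg hC₂nn (Real.rpow_nonneg hs₀.le _)))
  have hg2 : ∀ s ≥ s₀, |g s| ≤ K₂ * s ^ (-(2*τ₁) - 1) := by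
    intro s hs
    have hsp : (0:ℝ) < s := lt_of_lt_of_le hs₀ hs
    have b1 := hpow (-2*τ - 1) (-(2*τ₁) - 1) (by linarith) s hs
    have b2 := hpow (-τ - 1 + -τ₁) (-(2*τ₁) - 1) (by linarith) s hs
    have hvC := step1 s hs
    have h3 : s ^ (-τ - 1) * |v s| ≤
        C₂ * (s₀ ^ (-τ - 1 + -τ₁ - (-(2*τ₁) - 1)) * s ^ (-(2*τ₁) - 1)) := by
      calc s ^ (-τ - 1) * |v s| ≤ s ^ (-τ - 1) * (C₂ * s ^ (-τ₁)) :=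
            mul_le_mul_of_nonneg_left hvC (Real.rpow_nonneg hsp.le _)
      _ = C₂ * s ^ (-τ - 1 + -τ₁) := by rw [Real.rpow_add hsp]; ring
      _ ≤ C₂ * (s₀ ^ (-τ - 1 + -τ₁ - (-(2*τ₁) - 1)) * s ^ (-(2*τ₁) - 1)) :=
            mul_le_mul_of_nonneg_left b2 hC₂nn
    refine (hg' s hs).trans ?_
    calc C₁' * (s ^ (-2*τ - 1) + s ^ (-τ - 1) * |v s|)
        ≤ C₁' * (s₀ ^ (-2*τ - 1 - (-(2*τ₁) - 1)) * s ^ (-(2*τ₁) - 1)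
            + C₂ * (s₀ ^ (-τ - 1 + -τ₁ - (-(2*τ₁) - 1)) * s ^ (-(2*τ₁) - 1))) :=
          mul_le_mul_of_nonneg_left (add_le_add b1 h3) hC₁'nn
    _ = K₂ * s ^ (-(2*τ₁) - 1) := by rw [hK₂def]; ring
  have h2τ₁c' : 2*τ₁ < c := h2τ₁c
  have step2 := jang_decay_key c s₀ hs₀ a v v' g ha_cont ha_lb hv hode K₂ (2*τ₁) hK₂nn h2τ₁c' hg2
  set C₃ : ℝ := |v s₀| * s₀ ^ (2*τ₁) + K₂ / (c - 2*τ₁) with hC₃def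
  have hC₃nn : 0 ≤ C₃ :=
    add_nonneg (mul_nonneg (abs_nonneg _) (Real.rpow_nonneg hs₀.le _))
      (div_nonneg hK₂nn (by linarith))
  refine ⟨C₃ * s₀ ^ (-(2*τ₁) - -2*τ₀), fun s hs => ?_⟩
  have hsp : (0:ℝ) < s := lt_of_lt_of_le hs₀ hs
  have hlast := hpow (-(2*τ₁)) (-2*τ₀) (by linarith) s hs
  calc |v s| ≤ C₃ * s ^ (-(2*τ₁)) := step2 s hs
  _ ≤ C₃ * (s₀ ^ (-(2*τ₁) - -2*τ₀) * s ^ (-2*τ₀)) :=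
        mul_le_mul_of_nonneg_left hlast hC₃nn
  _ = C₃ * s₀ ^ (-(2*τ₁) - -2*τ₀) * s ^ (-2*τ₀) := by ring
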